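/- For 1 < p < ∞ and b ∈ ℓ^∞, the essential norm of the multiplication operator M_b on ℓ^p equals limsupₙ |b(n)|, i.e., inf over compact operators K on ℓ^p of ‖M_b − K‖ = limsupₙ |b(n)|. -/

import Mathlib

open Filter Topology
open scoped ENNReal

section Aux

variable {p : ℝ≥0∞} [Fact (1 ≤ p)]

private lemma stmt10_hp0 : p ≠ 0 := (lt_of_lt_of_le zero_lt_one Fact.out).ne'

private lemma stmt10_norm_le_mul_norm (hp' : p ≠ ⊤) {C : ℝ} (hC : 0 ≤ C)
    (f g : lp (fun _ : ℕ => ℝ) p) (h : ∀ n, |(g : ℕ → ℝ) n| ≤ C * |(f : ℕ → ℝ) n|) :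
    ‖g‖ ≤ C * ‖f‖ := by
  have hq : 0 < p.toReal := ENNReal.toReal_pos stmt10_hp0 hp'
  have hf := lp.hasSum_norm hq f
  have hg := lp.hasSum_norm hq g
  have hle : ‖g‖ ^ p.toReal ≤ C ^ p.toReal * ‖f‖ ^ p.toReal := by
    refine hasSum_le (fun n => ?_) hg (hf.mul_left _)
    calc ‖(g : ℕ → ℝ) n‖ ^ p.toReal ≤ (C * ‖(f : ℕ → ℝ) n‖) ^ p.toReal := by
          apply Real.rpow_le_rpow (norm_nonneg _) _ hq.le
          simpa [Real.norm_eq_abs] using h n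
      _ = C ^ p.toReal * ‖(f : ℕ → ℝ) n‖ ^ p.toReal :=
          Real.mul_rpow hC (norm_nonneg _)
  rw [← Real.rpow_le_rpow_iff (norm_nonneg g) (mul_nonneg hC (norm_nonneg f)) hq]
  rwa [Real.mul_rpow hC (norm_nonneg f)]

private lemma stmt10_tendsto_coord (hp' : p ≠ ⊤) (f : lp (fun _ : ℕ => ℝ) p) :
    Tendsto (fun n => |(f : ℕ → ℝ) n|) atTop (𝓝 0) := by
  have hq : 0 < p.toReal := ENNReal.toReal_pos stmt10_hp0 hp'
  have h1 : Tendsto (fun n => ‖(f : ℕ → ℝ) n‖ ^ p.toReal) atTop (𝓝 0) :=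
    (lp.hasSum_norm hq f).summable.tendsto_atTop_zero
  have h2 : Tendsto (fun n => (‖(f : ℕ → ℝ) n‖ ^ p.toReal) ^ p.toReal⁻¹) atTop
      (𝓝 ((0 : ℝ) ^ p.toReal⁻¹)) := h1.rpow_const (Or.inr (by positivity))
  rw [Real.zero_rpow (by positivity)] at h2
  refine h2.congr fun n => ?_
  rw [Real.rpow_rpow_inv (norm_nonneg _) hq.ne', Real.norm_eq_abs]

private lemma stmt10_rankOne_compact {X Y : Type*} [NormedAddCommGroup X] [NormedSpace ℝ X]
    [NormedAddCommGroup Y] [NormedSpace ℝ Y] (f : X →L[ℝ] ℝ) (y : Y) :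
    IsCompactOperator fun x => f x • y := by
  refine ⟨(fun t : ℝ => t • y) '' Metric.closedBall 0 1,
    (isCompact_closedBall 0 1).image (continuous_id.smul continuous_const), ?_⟩
  have h0 : f ⁻¹' Metric.closedBall 0 1 ∈ 𝓝 (0 : X) := by
    have := f.continuous.continuousAt (x := (0 : X))
    apply this.preimage_mem_nhds
    simpa [map_zero] using Metric.closedBall_mem_nhds (0 : ℝ) one_pos
  exact Filter.mem_of_superset h0 fun x hx => ⟨f x, hx, rfl⟩

private lemma stmt10_finsetSum_compact {X Y ι : Type*} [NormedAddCommGroup X]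
    [NormedAddCommGroup Y] (s : Finset ι) (f : ι → X → Y)
    (h : ∀ i ∈ s, IsCompactOperator (f i)) :
    IsCompactOperator (fun x => ∑ i ∈ s, f i x) := by
  classical
  induction s using Finset.induction_on with
  | empty => simp only [Finset.sum_empty]; exact isCompactOperator_zero
  | insert a s' hnotmem ih =>
      simp only [Finset.sum_insert hnotmem]
      exact (h a (Finset.mem_insert_self a s')).add
        (ih fun i hi => h i (Finset.mem_insert_of_mem hi))

end Aux

set_option maxHeartbeats 1000000 in
set_option synthInstance.maxHeartbeats 400000 in
theorem stmt10 (p : ℝ≥0∞) [Fact (1 ≤ p)] (hp : 1 < p) (hp' : p ≠ ⊤)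
    (b : lp (fun _ : ℕ => ℝ) ∞)
    (M : lp (fun _ : ℕ => ℝ) p →L[ℝ] lp (fun _ : ℕ => ℝ) p)
    (hM : ∀ (x : lp (fun _ : ℕ => ℝ) p) (n : ℕ), (M x : ℕ → ℝ) n = b n * x n) :
    sInf {c : ℝ | ∃ K : lp (fun _ : ℕ => ℝ) p →L[ℝ] lp (fun _ : ℕ => ℝ) p,
        IsCompactOperator K ∧ c = ‖M - K‖} =
      limsup (fun n => |b n|) atTop := by
  classical
  have hp0 : p ≠ 0 := (lt_of_lt_of_le zero_lt_one Fact.out).ne'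
  have hq : 0 < p.toReal := ENNReal.toReal_pos hp0 hp'
  set u : ℕ → ℝ := fun n => |b n| with hu
  have hub : ∀ n, u n ≤ ‖b‖ := fun n => by
    have h := lp.norm_apply_le_norm ENNReal.top_ne_zero b n
    rwa [Real.norm_eq_abs] at h
  have hbd : IsBoundedUnder (· ≤ ·) atTop u := isBoundedUnder_of ⟨‖b‖, hub⟩
  have hcob : IsCoboundedUnder (· ≤ ·) atTop u :=
    Filter.isCoboundedUnder_le_of_le atTop (x := 0) fun n => abs_nonneg _
  set L := limsup u atTop with hLdef
  have hL0 : 0 ≤ L :=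
    le_limsup_of_frequently_le (Frequently.of_forall fun n => abs_nonneg _) hbd
  -- Lower bound: every compact operator is at distance at least L from M
  have key : ∀ K : lp (fun _ : ℕ => ℝ) p →L[ℝ] lp (fun _ : ℕ => ℝ) p,
      IsCompactOperator K → L ≤ ‖M - K‖ := by
    intro K hK
    refine le_of_forall_pos_le_add fun ε hε => ?_
    obtain ⟨C, hCcomp, hCmem⟩ := hK
    obtain ⟨r, hr, hball⟩ := Metric.mem_nhds_iff.mp hCmem
    set s := r / 2 with hsdef
    have hs0 : 0 < s := half_pos hr
    set ε' := ε * s / 2 with hε'def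
    have hε'0 : 0 < ε' := by positivity
    obtain ⟨t, htfin, htcover⟩ := Metric.totallyBounded_iff.mp hCcomp.totallyBounded ε' hε'0
    have htail : ∀ᶠ n in atTop, ∀ y ∈ t, |(y : ℕ → ℝ) n| ≤ ε' := by
      rw [Filter.eventually_all_finite htfin]
      exact fun y _ => (stmt10_tendsto_coord hp' y).eventually_le_const hε'0
    refine limsup_le_of_le hcob ?_
    filter_upwards [htail] with n hn
    set x : lp (fun _ : ℕ => ℝ) p := s • lp.single p n (1 : ℝ) with hxdef
    have hxn : (x : ℕ → ℝ) n = s := by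
      rw [hxdef, lp.coeFn_smul, Pi.smul_apply, lp.single_apply_self, smul_eq_mul, mul_one]
    have hxnorm : ‖x‖ = s := by
      rw [hxdef, norm_smul]
      have h1 : ‖(lp.single p n (1 : ℝ) : lp (fun _ : ℕ => ℝ) p)‖ = 1 := by
        simpa using lp.norm_single (E := fun _ : ℕ => ℝ) (pos_iff_ne_zero.mpr hp0) n (1 : ℝ)
      rw [h1, mul_one, Real.norm_eq_abs, abs_of_pos hs0]
    have hKx : K x ∈ C := hball (mem_ball_zero_iff.mpr (by rw [hxnorm, hsdef]; linarith))
    obtain ⟨y, hyt, hxy⟩ := Set.mem_iUnion₂.mp (htcover hKx)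
    rw [Metric.mem_ball, dist_eq_norm] at hxy
    have hKxn : |(K x : ℕ → ℝ) n| ≤ 2 * ε' := by
      have h1 : |(K x : ℕ → ℝ) n - (y : ℕ → ℝ) n| ≤ ‖K x - y‖ := by
        have h := lp.norm_apply_le_norm hp0 (K x - y) n
        rw [lp.coeFn_sub, Pi.sub_apply, Real.norm_eq_abs] at h
        exact h
      have h2 : |(y : ℕ → ℝ) n| ≤ ε' := hn y hyt
      calc |(K x : ℕ → ℝ) n|
          ≤ |(K x : ℕ → ℝ) n - (y : ℕ → ℝ) n| + |(y : ℕ → ℝ) n| := by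
            have h := abs_add_le ((K x : ℕ → ℝ) n - (y : ℕ → ℝ) n) ((y : ℕ → ℝ) n)
            rwa [sub_add_cancel] at h
        _ ≤ 2 * ε' := by linarith
    have hMKn : ((M - K) x : ℕ → ℝ) n = b n * s - (K x : ℕ → ℝ) n := by
      rw [ContinuousLinearMap.sub_apply, lp.coeFn_sub, Pi.sub_apply, hM, hxn]
    have habs : |((M - K) x : ℕ → ℝ) n| ≤ ‖(M - K) x‖ := by
      have h := lp.norm_apply_le_norm hp0 ((M - K) x) n
      rwa [Real.norm_eq_abs] at h
    have hop : ‖(M - K) x‖ ≤ ‖M - K‖ * s := by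
      have h := (M - K).le_opNorm x
      rwa [hxnorm] at h
    have hlow : |b n| * s - 2 * ε' ≤ ‖M - K‖ * s := by
      have h3 : |b n * s| - |(K x : ℕ → ℝ) n| ≤ |b n * s - (K x : ℕ → ℝ) n| :=
        abs_sub_abs_le_abs_sub _ _
      rw [abs_mul, abs_of_pos hs0] at h3
      rw [hMKn] at habs
      linarith
    have h2ε : 2 * ε' = ε * s := by rw [hε'def]; ring
    rw [h2ε] at hlow
    show |b n| ≤ ‖M - K‖ + ε
    nlinarith [hs0]
  refine le_antisymm ?_ (le_csInf ⟨‖M - 0‖, 0, by simpa using isCompactOperator_zero, rfl⟩ ?_)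
  swap
  · rintro c ⟨K, hK, rfl⟩
    exact key K hK
  have hbdd : BddBelow {c : ℝ | ∃ K : lp (fun _ : ℕ => ℝ) p →L[ℝ] lp (fun _ : ℕ => ℝ) p,
      IsCompactOperator K ∧ c = ‖M - K‖} := by
    refine ⟨0, ?_⟩
    rintro c ⟨K, hK, rfl⟩
    exact norm_nonneg _
  refine le_of_forall_pos_le_add fun ε hε => ?_
  have hev : ∀ᶠ n in atTop, u n < L + ε :=
    eventually_lt_of_limsup_lt (by rw [← hLdef]; linarith) hbd
  obtain ⟨N, hN⟩ := eventually_atTop.mp hev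
  -- coordinate functionals
  let coord : ℕ → (lp (fun _ : ℕ => ℝ) p →L[ℝ] ℝ) := fun i =>
    LinearMap.mkContinuous
      { toFun := fun x : lp (fun _ : ℕ => ℝ) p => (x : ℕ → ℝ) i
        map_add' := fun x y => by simp [lp.coeFn_add]
        map_smul' := fun c x => by simp [lp.coeFn_smul] }
      1 (fun x => by rw [one_mul]; exact lp.norm_apply_le_norm hp0 x i)
  let P : lp (fun _ : ℕ => ℝ) p →L[ℝ] lp (fun _ : ℕ => ℝ) p :=
    ∑ i ∈ Finset.range N, (coord i).smulRight (lp.single p i (1 : ℝ))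
  have hterm : ∀ (x : lp (fun _ : ℕ => ℝ) p) (i m : ℕ),
      (((coord i).smulRight (lp.single p i (1 : ℝ))) x : ℕ → ℝ) m
        = if m = i then (x : ℕ → ℝ) m else 0 := by
    intro x i m
    rw [ContinuousLinearMap.smulRight_apply, lp.coeFn_smul, Pi.smul_apply]
    rcases eq_or_ne m i with h | h
    · subst h
      rw [lp.single_apply_self, if_pos rfl, smul_eq_mul, mul_one]
      rfl
    · rw [lp.single_apply_ne p i _ h, if_neg h, smul_zero]
  have hPapply : ∀ (x : lp (fun _ : ℕ => ℝ) p) (m : ℕ),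
      (P x : ℕ → ℝ) m = if m < N then (x : ℕ → ℝ) m else 0 := by
    intro x m
    calc (P x : ℕ → ℝ) m
        = ∑ i ∈ Finset.range N,
            (((coord i).smulRight (lp.single p i (1 : ℝ))) x : ℕ → ℝ) m := by
          rw [show P = ∑ i ∈ Finset.range N, (coord i).smulRight (lp.single p i (1 : ℝ))
            from rfl, ContinuousLinearMap.sum_apply, lp.coeFn_sum, Finset.sum_apply]
      _ = ∑ i ∈ Finset.range N, if m = i then (x : ℕ → ℝ) m else 0 :=
          Finset.sum_congr rfl fun i _ => hterm x i m
      _ = if m < N then (x : ℕ → ℝ) m else 0 := by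
          rw [Finset.sum_ite_eq]
          simp [Finset.mem_range]
  have hPc : IsCompactOperator (⇑(M.comp P)) := by
    have h1 : IsCompactOperator (⇑P) := by
      have h2 : ⇑P = fun x => ∑ i ∈ Finset.range N,
          (fun (j : ℕ) (z : lp (fun _ : ℕ => ℝ) p) =>
            coord j z • lp.single p j (1 : ℝ)) i x := by
        funext x
        rw [show P = ∑ i ∈ Finset.range N, (coord i).smulRight (lp.single p i (1 : ℝ))
          from rfl, ContinuousLinearMap.sum_apply]
        exact Finset.sum_congr rfl fun i _ => ContinuousLinearMap.smulRight_apply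
      rw [h2]
      exact stmt10_finsetSum_compact _ _ fun i _ => stmt10_rankOne_compact (coord i) _
    have := h1.continuous_comp M.continuous
    rwa [ContinuousLinearMap.coe_comp']
  have hMP : ‖M - M.comp P‖ ≤ L + ε := by
    refine ContinuousLinearMap.opNorm_le_bound _ (by linarith) fun x => ?_
    refine stmt10_norm_le_mul_norm hp' (by linarith) x _ fun n => ?_
    have hco : (((M - M.comp P) x) : ℕ → ℝ) n
        = if n < N then 0 else b n * (x : ℕ → ℝ) n := by
      rw [ContinuousLinearMap.sub_apply, lp.coeFn_sub, Pi.sub_apply, hM,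
        ContinuousLinearMap.comp_apply, hM, hPapply]
      by_cases h : n < N <;> simp [h]
    rw [hco]
    by_cases h : n < N
    · rw [if_pos h, abs_zero]
      positivity
    · rw [if_neg h, abs_mul]
      have hbn : |b n| ≤ L + ε := le_of_lt (hN n (le_of_not_gt h))
      exact mul_le_mul_of_nonneg_right hbn (abs_nonneg _)
  exact csInf_le_of_le hbdd ⟨M.comp P, hPc, rfl⟩ hMP
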